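/- Let u, v be positive integers and t₁ < t₂ be real numbers with v/u + 1 < t₂ − t₁. Then there exists a rapidly decreasing (Schwartz) function f: ℝ → ℂ band-limited in [t₁, t₂] such that f(0) = 1 and f((u/v)·n) = 0 for all n ∈ ℤ \ {0}. (One may take f(x) = g((v/u)x)·e^{2πi x x₀} with x₀ = t₁ + (1 + v/u)/2 and g a real Schwartz function band-limited in [−(1+u/v)/2, (1+u/v)/2] with g(0)=1 and g(n)=0 for n ∈ ℤ\{0}.) -/

import Mathlib

open MeasureTheory Set

noncomputable section

/-- A function `f : ℝ → ℂ` is band-limited in `I` if its distributional Fourier transform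
is supported in `I`, i.e. `⟨𝓕 f, g⟩ = ⟨f, 𝓕 g⟩ = 0` for every Schwartz function `g`
whose support is disjoint from `I`. -/
def BandLimitedIn (I : Set ℝ) (f : ℝ → ℂ) : Prop :=
  ∀ g : SchwartzMap ℝ ℂ, Disjoint (tsupport ⇑g) I →
    ∫ t : ℝ, f t * FourierTransform.fourier (⇑g : ℝ → ℂ) t = 0

namespace InterpolationAux

open Real Complex FourierTransform
open scoped ContDiff RealInnerProductSpace

/-- A compactly supported smooth function is a Schwartz function. -/
def mySchwartz (f : ℝ → ℂ) (h1 : ContDiff ℝ ∞ f) (h2 : HasCompactSupport f) :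
    SchwartzMap ℝ ℂ where
  toFun := f
  smooth' := h1
  decay' := by
    intro k n
    have hc : Continuous fun x : ℝ => ‖x‖ ^ k * ‖iteratedFDeriv ℝ n f x‖ :=
      ((continuous_norm.pow k)).mul ((h1.continuous_iteratedFDeriv (mod_cast le_top)).norm)
    have hs : HasCompactSupport fun x : ℝ => ‖x‖ ^ k * ‖iteratedFDeriv ℝ n f x‖ :=
      ((h2.iteratedFDeriv n).norm.mul_left)
    obtain ⟨C, hC⟩ := hc.bounded_above_of_compact_support hs
    exact ⟨C, fun x => (le_abs_self _).trans ((Real.norm_eq_abs _ ▸ hC x))⟩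

/-- The multiplication formula for the Fourier transform. -/
lemma mult_formula (φ g : ℝ → ℂ) (hφ : Integrable φ) (hg : Integrable g) :
    ∫ ξ : ℝ, 𝓕 φ ξ * g ξ = ∫ x : ℝ, φ x * 𝓕 g x := by
  have := VectorFourier.integral_bilin_fourierIntegral_eq_flip
    (E := ℂ) (F := ℂ) (G := ℂ) (V := ℝ) (W := ℝ) (μ := volume) (ν := volume)
    (e := 𝐞) (L := innerₗ ℝ) (f := φ) (g := g)
    (ContinuousLinearMap.mul ℂ ℂ) Real.continuous_fourierChar
    (by fun_prop) hφ hg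
  simp only [flip_innerₗ] at this
  exact this

variable (a t₁ : ℝ)

/-- the frequency-side profile -/
def myPsi (ξ : ℝ) : ℂ :=
  ((a⁻¹ * (Real.smoothTransition (ξ - t₁) - Real.smoothTransition (ξ - t₁ - a)) : ℝ) : ℂ)

lemma myPsi_smooth : ContDiff ℝ ∞ (myPsi a t₁) := by
  apply Complex.ofRealCLM.contDiff.comp
  apply ContDiff.mul contDiff_const
  exact (Real.smoothTransition.contDiff.comp (contDiff_id.sub contDiff_const)).sub
    (Real.smoothTransition.contDiff.comp ((contDiff_id.sub contDiff_const).sub contDiff_const))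

lemma myPsi_eq_zero_left {ξ : ℝ} (ha : 0 ≤ a) (h : ξ ≤ t₁) : myPsi a t₁ ξ = 0 := by
  have h1 : Real.smoothTransition (ξ - t₁) = 0 :=
    Real.smoothTransition.zero_of_nonpos (by linarith)
  have h2 : Real.smoothTransition (ξ - t₁ - a) = 0 :=
    Real.smoothTransition.zero_of_nonpos (by linarith)
  simp [myPsi, h1, h2]

lemma myPsi_eq_zero_right {ξ : ℝ} (ha : 0 ≤ a) (h : t₁ + a + 1 ≤ ξ) : myPsi a t₁ ξ = 0 := by
  have h1 : Real.smoothTransition (ξ - t₁) = 1 :=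
    Real.smoothTransition.one_of_one_le (by linarith)
  have h2 : Real.smoothTransition (ξ - t₁ - a) = 1 :=
    Real.smoothTransition.one_of_one_le (by linarith)
  simp [myPsi, h1, h2]

lemma myPsi_compactSupport (ha : 0 ≤ a) : HasCompactSupport (myPsi a t₁) := by
  apply HasCompactSupport.intro (isCompact_Icc (a := t₁) (b := t₁ + a + 1))
  intro ξ hξ
  simp only [mem_Icc, not_and_or, not_le] at hξ
  rcases hξ with h | h
  · exact myPsi_eq_zero_left a t₁ ha h.le
  · exact myPsi_eq_zero_right a t₁ ha h.le

lemma myPsi_fourierInv (ha : 0 < a) (x : ℝ)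
    (hx : Complex.exp (2 * ↑π * Complex.I * ↑x * ↑a) = 1) :
    𝓕⁻ (myPsi a t₁) x
      = (a⁻¹ : ℂ) * ∫ ξ in (t₁+1)..(t₁+1+a), Complex.exp (2 * ↑π * Complex.I * ↑x * ↑ξ) := by
  set d : ℝ := t₁ + a + 1 with hd
  set E : ℝ → ℂ := fun ξ => Complex.exp (2 * ↑π * Complex.I * ↑x * ↑ξ) with hE
  set g : ℝ → ℂ := fun ξ => ((Real.smoothTransition (ξ - t₁) : ℝ) : ℂ) with hg
  have hEcont : Continuous E := by
    apply Complex.continuous_exp.comp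
    exact (continuous_const.mul Complex.continuous_ofReal)
  have hgcont : Continuous g :=
    Complex.continuous_ofReal.comp (Real.smoothTransition.continuous.comp (by continuity))
  have hga : Continuous (fun ξ => g (ξ - a)) := hgcont.comp (by continuity)
  -- step 1
  have step1 : 𝓕⁻ (myPsi a t₁) x = ∫ ξ : ℝ, E ξ * myPsi a t₁ ξ := by
    rw [Real.fourierInv_eq']
    congr 1
    ext v
    rw [smul_eq_mul]
    congr 2
    simp only [RCLike.inner_apply, conj_trivial]
    push_cast
    ring
  -- step 2: restrict to Ioc
  have step2 : ∫ ξ : ℝ, E ξ * myPsi a t₁ ξ = ∫ ξ in t₁..d, E ξ * myPsi a t₁ ξ := by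
    rw [intervalIntegral.integral_of_le (by simp [hd]; linarith)]
    symm
    apply setIntegral_eq_integral_of_forall_compl_eq_zero
    intro ξ hξ
    simp only [mem_Ioc, not_and_or, not_lt, not_le] at hξ
    rcases hξ with h | h
    · rw [myPsi_eq_zero_left a t₁ ha.le h, mul_zero]
    · rw [myPsi_eq_zero_right a t₁ ha.le h.le, mul_zero]
  -- pointwise rewrite
  have key : ∀ ξ : ℝ, E ξ * myPsi a t₁ ξ = (a⁻¹ : ℂ) * (E ξ * g ξ - E ξ * g (ξ - a)) := by
    intro ξ
    simp only [myPsi, hg]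
    have h3 : ξ - t₁ - a = (ξ - a) - t₁ := by ring
    rw [h3]
    push_cast
    ring
  -- shift
  have step6 : (∫ ξ in t₁..d, E ξ * g (ξ - a)) = ∫ ξ in (t₁ - a)..(d - a), E ξ * g ξ := by
    have h1 : (∫ ξ in t₁..d, E ξ * g (ξ - a))
        = ∫ ξ in t₁..d, (fun η => E (η + a) * g η) (ξ - a) := by
      apply intervalIntegral.integral_congr
      intro ξ _
      simp only
      rw [sub_add_cancel]
    rw [h1, intervalIntegral.integral_comp_sub_right (fun η => E (η + a) * g η) a]
    apply intervalIntegral.integral_congr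
    intro ξ _
    simp only
    congr 1
    simp only [hE]
    push_cast
    rw [mul_add, Complex.exp_add, hx, mul_one]
  -- adjacent intervals
  have hint : ∀ p q : ℝ, IntervalIntegrable (fun ξ => E ξ * g ξ) volume p q :=
    fun p q => (hEcont.mul hgcont).intervalIntegrable p q
  have i1 : (∫ ξ in (t₁ - a)..t₁, E ξ * g ξ) + ∫ ξ in t₁..d, E ξ * g ξ
      = ∫ ξ in (t₁ - a)..d, E ξ * g ξ :=
    intervalIntegral.integral_add_adjacent_intervals (hint _ _) (hint _ _)
  have i2 : (∫ ξ in (t₁ - a)..(d - a), E ξ * g ξ) + ∫ ξ in (d - a)..d, E ξ * g ξ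
      = ∫ ξ in (t₁ - a)..d, E ξ * g ξ :=
    intervalIntegral.integral_add_adjacent_intervals (hint _ _) (hint _ _)
  have z1 : (∫ ξ in (t₁ - a)..t₁, E ξ * g ξ) = 0 := by
    have : EqOn (fun ξ => E ξ * g ξ) (fun _ => (0 : ℂ)) (Set.uIcc (t₁ - a) t₁) := by
      intro ξ hξ
      rw [Set.uIcc_of_le (by linarith)] at hξ
      have : g ξ = 0 := by
        simp only [hg, Complex.ofReal_eq_zero]
        exact Real.smoothTransition.zero_of_nonpos (by have := hξ.2; linarith)
      simp [this]
    rw [intervalIntegral.integral_congr this]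
    simp
  have z2 : (∫ ξ in (d - a)..d, E ξ * g ξ) = ∫ ξ in (d - a)..d, E ξ := by
    apply intervalIntegral.integral_congr
    intro ξ hξ
    rw [Set.uIcc_of_le (by simp [hd]; linarith)] at hξ
    have : g ξ = 1 := by
      simp only [hg, Complex.ofReal_eq_one]
      exact Real.smoothTransition.one_of_one_le (by have := hξ.1; simp only [hd] at this; linarith)
    simp [this]
  -- assemble
  rw [step1, step2, intervalIntegral.integral_congr (fun ξ _ => key ξ),
    intervalIntegral.integral_const_mul,
    intervalIntegral.integral_sub (f := fun ξ => E ξ * g ξ) (g := fun ξ => E ξ * g (ξ - a)) ((hEcont.mul hgcont).intervalIntegrable _ _)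
      ((hEcont.mul hga).intervalIntegrable _ _), step6]
  have hda : d - a = t₁ + 1 := by simp [hd]; ring
  congr 1
  rw [show t₁ + 1 + a = d by rw [hd]; ring, ← hda, ← z2]
  linear_combination i1 - i2 - z1

end InterpolationAux

open InterpolationAux Real Complex FourierTransform in
/-- **Interpolation (shifted band).** For positive integers `u, v` and reals `t₁ < t₂` with
`v/u + 1 < t₂ - t₁`, there is a Schwartz function `f : ℝ → ℂ` band-limited in `[t₁, t₂]`
with `f(0) = 1` and `f((u/v)·n) = 0` for all nonzero integers `n`. -/
theorem interpolation_function_shifted (u v : ℕ) (hu : 0 < u) (hv : 0 < v)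
    (t₁ t₂ : ℝ) (ht : t₁ < t₂) (hband : (v : ℝ) / u + 1 < t₂ - t₁) :
    ∃ f : SchwartzMap ℝ ℂ,
      BandLimitedIn (Icc t₁ t₂) ⇑f ∧
      f 0 = 1 ∧ ∀ n : ℤ, n ≠ 0 → f (((u : ℝ) / v) * n) = 0 := by
  have hu' : (0 : ℝ) < u := by exact_mod_cast hu
  have hv' : (0 : ℝ) < v := by exact_mod_cast hv
  set a : ℝ := (v : ℝ) / u with ha_def
  have ha : 0 < a := div_pos hv' hu'
  set ψS : SchwartzMap ℝ ℂ :=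
    mySchwartz (myPsi a t₁) (myPsi_smooth a t₁) (myPsi_compactSupport a t₁ ha.le) with hψS
  set f : SchwartzMap ℝ ℂ := (FourierTransform.fourierCLE ℂ (SchwartzMap ℝ ℂ)).symm ψS with hf
  have hfcoe : ⇑f = 𝓕⁻ ⇑ψS := by
    rw [hf, FourierTransform.fourierCLE_symm_apply, SchwartzMap.fourierInv_coe]
  have hψcoe : ⇑ψS = myPsi a t₁ := rfl
  refine ⟨f, ?_, ?_, ?_⟩
  · -- band-limited
    intro g hdisj
    have h1 : ∀ t : ℝ, f t * 𝓕 (⇑g) t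
        = 𝓕 (⇑g) t * f t := fun t => mul_comm _ _
    simp_rw [h1]
    rw [mult_formula (⇑g) (⇑f) g.integrable f.integrable]
    have hFf : 𝓕 ⇑f = ⇑ψS := by
      have := FourierTransform.fourierCLE_apply (R := ℂ) f
      rw [hf] at this ⊢
      rw [← SchwartzMap.fourier_coe, ← this, (FourierTransform.fourierCLE ℂ (SchwartzMap ℝ ℂ)).apply_symm_apply]
    rw [hFf]
    have hzero : ∀ x : ℝ, g x * ψS x = 0 := by
      intro x
      by_cases hψx : ψS x = 0
      · rw [hψx, mul_zero]
      · have hx1 : t₁ < x := by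
          by_contra h
          exact hψx (hψcoe ▸ myPsi_eq_zero_left a t₁ ha.le (not_lt.1 h))
        have hx2 : x < t₂ := by
          by_contra h
          refine hψx (hψcoe ▸ myPsi_eq_zero_right a t₁ ha.le ?_)
          have := not_lt.1 h
          linarith
        have hxI : x ∈ Icc t₁ t₂ := ⟨hx1.le, hx2.le⟩
        have hgx : g x = 0 := by
          by_contra hgx
          exact (Set.disjoint_left.1 hdisj) (subset_tsupport _ (Function.mem_support.2 hgx)) hxI
        rw [hgx, zero_mul]
    simp_rw [hzero]
    exact integral_zero ℝ ℂ
  · -- f 0 = 1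
    have hx0 : Complex.exp (2 * ↑π * Complex.I * ↑(0 : ℝ) * ↑a) = 1 := by
      simp
    have := myPsi_fourierInv a t₁ ha 0 hx0
    have hf0 : f 0 = 𝓕⁻ (myPsi a t₁) 0 := by rw [hfcoe, hψcoe]
    rw [hf0, this]
    simp only [Complex.ofReal_zero, mul_zero, zero_mul, Complex.exp_zero]
    rw [intervalIntegral.integral_const]
    have : (t₁ + 1 + a - (t₁ + 1)) = a := by ring
    rw [this]
    rw [real_smul, mul_one]
    rw [← Complex.ofReal_inv, ← Complex.ofReal_mul, inv_mul_cancel₀ ha.ne']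
    norm_num
  · -- zeros
    intro n hn
    set x : ℝ := (u : ℝ) / v * n with hx_def
    have hxa : x * a = (n : ℝ) := by
      rw [hx_def, ha_def]
      field_simp
    have hxne : x ≠ 0 := by
      rw [hx_def]
      exact mul_ne_zero (ne_of_gt (div_pos hu' hv')) (Int.cast_ne_zero.2 hn)
    have hx : Complex.exp (2 * ↑π * Complex.I * ↑x * ↑a) = 1 := by
      have : (2 * ↑π * Complex.I * ↑x * ↑a : ℂ) = (n : ℂ) * (2 * ↑π * Complex.I) := by
        have : ((x : ℂ) * (a : ℂ)) = (n : ℂ) := by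
          rw [← Complex.ofReal_mul, hxa]
          push_cast
          ring
        linear_combination (2 * (π : ℂ) * Complex.I) * this
      rw [this]
      exact Complex.exp_int_mul_two_pi_mul_I n
    have heval := myPsi_fourierInv a t₁ ha x hx
    have hfx : f x = 𝓕⁻ (myPsi a t₁) x := by rw [hfcoe, hψcoe]
    rw [hfx, heval]
    set c : ℂ := 2 * ↑π * Complex.I * ↑x with hc_def
    have hc : c ≠ 0 := by
      rw [hc_def]
      exact mul_ne_zero (mul_ne_zero (mul_ne_zero two_ne_zero
        (Complex.ofReal_ne_zero.2 Real.pi_ne_zero)) Complex.I_ne_zero)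
        (Complex.ofReal_ne_zero.2 hxne)
    rw [integral_exp_mul_complex hc]
    have hnum : Complex.exp (c * ((t₁ + 1 + a : ℝ) : ℂ)) = Complex.exp (c * ((t₁ + 1 : ℝ) : ℂ)) := by
      have h1 : (c * ((t₁ + 1 + a : ℝ) : ℂ)) = c * ((t₁ + 1 : ℝ) : ℂ) + c * (a : ℂ) := by
        push_cast; ring
      rw [h1, Complex.exp_add, hx, mul_one]
    rw [hnum, sub_self, zero_div, mul_zero]

end
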